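/- (Convergence of the adaptive routine FIXPT.) Suppose ‖l̄‖ < c²/(4‖T‖³‖A₁‖); let r* with 0 < r* < c/(2‖T‖³‖A₁‖), set L := 2 r* ‖T‖³ ‖A₁‖ / c (so 0 < L < 1), and let ū be the unique element of (ker T)⊥ with ‖ū‖ ≤ r* and G ū + G₁(ū) = l̄. Let ε₀ satisfy 0 < ε₀ < r*, ε₀ < 1 and ε₀ ≠ L, and set ε_k := ε₀ᵏ for k ≥ 1 (with the value ε₀ understood at k = 0). Let (v_n)_{n≥0} be a sequence in H with v₀ = 0 such that, for every n ≥ 0, the unique element h_n ∈ (ker T)⊥ with G h_n = l̄ − G₁(v_n) satisfies ‖P v_{n+1} − h_n‖ ≤ ε_{n+1}, and assume ℰ_n ≤ r* for all n, where ℰ_n := Σ_{k=2}^{n+1} ε_k + (1+L)·Σ_{h=0}^{n−3} Σ_{k=3}^{n−h} ε_k·L^{n−h−k} + (ε₁ + L·(ε₀ + ‖l̄‖/c))·Σ_{k=0}^{n−1} Lᵏ + ε₀ + ‖l̄‖/c (sums over empty index ranges being zero). Then for every n ≥ 0 one has ‖P v_{n+1} − ū‖ ≤ ε₀·(ε₀^{n+1}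 − L^{n+1})/(ε₀ − L) + Lⁿ·r*, and the sequence (P v_n) converges in H to ū. -/

import Mathlib

open scoped RealInnerProductSpace
open Filter Topology

set_option maxHeartbeats 2000000 in
/-- Convergence of the adaptive routine FIXPT: the projected inexact fixed point
iterates `P v_n` satisfy the error estimate
`‖P v_{n+1} − ū‖ ≤ ε₀(ε₀^{n+1} − L^{n+1})/(ε₀ − L) + Lⁿ r*` and converge to the
unique solution `ū` of the discrete nonlinear problem. -/
theorem fixpt_routine_convergence
    {V H : Type*} [NormedAddCommGroup V] [InnerProductSpace ℝ V] [CompleteSpace V]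
    [NormedAddCommGroup H] [InnerProductSpace ℝ H] [CompleteSpace H]
    (B : V →L[ℝ] V) (α : ℝ) (hα : 0 < α)
    (hB : ∀ v : V, α * ‖v‖ ^ 2 ≤ ⟪B v, v⟫)
    (T : H →L[ℝ] V) (hT : Function.Surjective T)
    (G : H →L[ℝ] H) (hG : G = (ContinuousLinearMap.adjoint T).comp (B.comp T))
    (P : H →L[ℝ] H)
    (hP : ∀ x : H, P x ∈ (LinearMap.ker (T : H →ₗ[ℝ] V))ᗮ ∧ x - P x ∈ LinearMap.ker (T : H →ₗ[ℝ] V))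
    (c : ℝ) (hc : 0 < c) (hcG : ∀ x ∈ (LinearMap.ker (T : H →ₗ[ℝ] V))ᗮ, c * ‖x‖ ≤ ‖G x‖)
    (A₁ : V →L[ℝ] V →L[ℝ] V) (hA₁ : ‖A₁‖ ≠ 0)
    (G₁ : H → H) (hG₁ : ∀ x : H, G₁ x = ContinuousLinearMap.adjoint T (A₁ (T x) (T x)))
    (lbar : H) (hlbar : lbar ∈ LinearMap.range (ContinuousLinearMap.adjoint T : V →ₗ[ℝ] H))
    (hl : ‖lbar‖ < c ^ 2 / (4 * ‖T‖ ^ 3 * ‖A₁‖))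
    (rs : ℝ) (hrs : 0 < rs) (hrs' : rs < c / (2 * ‖T‖ ^ 3 * ‖A₁‖))
    (L : ℝ) (hL : L = 2 * rs * ‖T‖ ^ 3 * ‖A₁‖ / c)
    (ubar : H) (hubar : ubar ∈ (LinearMap.ker (T : H →ₗ[ℝ] V))ᗮ ∧ ‖ubar‖ ≤ rs ∧ G ubar + G₁ ubar = lbar)
    (hunique : ∀ u : H,
      u ∈ (LinearMap.ker (T : H →ₗ[ℝ] V))ᗮ → ‖u‖ ≤ rs → G u + G₁ u = lbar → u = ubar)
    (ε₀ : ℝ) (hε₀0 : 0 < ε₀) (hε₀r : ε₀ < rs) (hε₀1 : ε₀ < 1) (hε₀L : ε₀ ≠ L)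
    (ε : ℕ → ℝ) (hε0 : ε 0 = ε₀) (hεk : ∀ k : ℕ, 1 ≤ k → ε k = ε₀ ^ k)
    (v : ℕ → H) (hv0 : v 0 = 0)
    (hstep : ∀ n : ℕ, ∀ h : H, h ∈ (LinearMap.ker (T : H →ₗ[ℝ] V))ᗮ →
      G h = lbar - G₁ (v n) → ‖P (v (n + 1)) - h‖ ≤ ε (n + 1))
    (hE : ∀ n : ℕ,
      (∑ k ∈ Finset.Icc 2 (n + 1), ε k) +
      (1 + L) * (∑ h ∈ Finset.range (n - 2), ∑ k ∈ Finset.Icc 3 (n - h),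
        ε k * L ^ (n - h - k)) +
      (ε 1 + L * (ε 0 + ‖lbar‖ / c)) * (∑ k ∈ Finset.range n, L ^ k) +
      ε 0 + ‖lbar‖ / c ≤ rs) :
    (∀ n : ℕ, ‖P (v (n + 1)) - ubar‖ ≤
      ε₀ * (ε₀ ^ (n + 1) - L ^ (n + 1)) / (ε₀ - L) + L ^ n * rs) ∧
    Tendsto (fun n : ℕ => P (v n)) atTop (𝓝 ubar) := by
  classical
  -- basic positivity facts
  have hA₁0 : 0 < ‖A₁‖ := (norm_nonneg A₁).lt_of_ne (Ne.symm hA₁)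
  have hTA : 0 < 2 * ‖T‖ ^ 3 * ‖A₁‖ := by
    rcases lt_or_ge 0 (2 * ‖T‖ ^ 3 * ‖A₁‖) with h | h
    · exact h
    · have h0 : 2 * ‖T‖ ^ 3 * ‖A₁‖ = 0 := le_antisymm h (by positivity)
      rw [h0, div_zero] at hrs'
      linarith
  have hT0 : 0 < ‖T‖ := by
    by_contra h
    push_neg at h
    have h0 : ‖T‖ = 0 := le_antisymm h (norm_nonneg T)
    rw [h0] at hTA
    norm_num at hTA
  have hL0 : 0 < L := by rw [hL]; positivity
  have hL1 : L < 1 := by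
    rw [hL, div_lt_one hc]
    calc 2 * rs * ‖T‖ ^ 3 * ‖A₁‖ = rs * (2 * ‖T‖ ^ 3 * ‖A₁‖) := by ring
      _ < c / (2 * ‖T‖ ^ 3 * ‖A₁‖) * (2 * ‖T‖ ^ 3 * ‖A₁‖) := by
          exact mul_lt_mul_of_pos_right hrs' hTA
      _ = c := div_mul_cancel₀ c (ne_of_gt hTA)
  have hQc : ‖T‖ ^ 3 * ‖A₁‖ = L * c / (2 * rs) := by
    rw [hL]; field_simp
  -- the adjoint bound
  have hadj : ∀ x : V, ‖ContinuousLinearMap.adjoint T x‖ ≤ ‖T‖ * ‖x‖ := by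
    intro x
    calc ‖ContinuousLinearMap.adjoint T x‖ ≤ ‖ContinuousLinearMap.adjoint T‖ * ‖x‖ :=
          (ContinuousLinearMap.adjoint T).le_opNorm x
      _ = ‖T‖ * ‖x‖ := by rw [LinearIsometryEquiv.norm_map]
  -- Lipschitz estimate for G₁
  have hG₁lip : ∀ w w' : H,
      ‖G₁ w - G₁ w'‖ ≤ ‖T‖ ^ 3 * ‖A₁‖ * ((‖w‖ + ‖w'‖) * ‖w - w'‖) := by
    intro w w'
    rw [hG₁, hG₁, ← map_sub]
    have hsplit : A₁ (T w) (T w) - A₁ (T w') (T w') =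
        A₁ (T w - T w') (T w) + A₁ (T w') (T w - T w') := by
      simp only [map_sub, ContinuousLinearMap.sub_apply]
      abel
    calc ‖ContinuousLinearMap.adjoint T (A₁ (T w) (T w) - A₁ (T w') (T w'))‖
        ≤ ‖T‖ * ‖A₁ (T w) (T w) - A₁ (T w') (T w')‖ := hadj _
      _ = ‖T‖ * ‖A₁ (T w - T w') (T w) + A₁ (T w') (T w - T w')‖ := by rw [hsplit]
      _ ≤ ‖T‖ * (‖A₁ (T w - T w') (T w)‖ + ‖A₁ (T w') (T w - T w')‖) := by
          gcongr; exact norm_add_le _ _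
      _ ≤ ‖T‖ * (‖A₁‖ * ‖T w - T w'‖ * ‖T w‖ + ‖A₁‖ * ‖T w'‖ * ‖T w - T w'‖) := by
          gcongr
          · exact A₁.le_opNorm₂ _ _
          · exact A₁.le_opNorm₂ _ _
      _ = ‖T‖ * (‖A₁‖ * ‖T (w - w')‖ * ‖T w‖ + ‖A₁‖ * ‖T w'‖ * ‖T (w - w')‖) := by
          rw [map_sub]
      _ ≤ ‖T‖ * (‖A₁‖ * (‖T‖ * ‖w - w'‖) * (‖T‖ * ‖w‖) +
            ‖A₁‖ * (‖T‖ * ‖w'‖) * (‖T‖ * ‖w - w'‖)) := by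
          gcongr <;> exact T.le_opNorm _
      _ = ‖T‖ ^ 3 * ‖A₁‖ * ((‖w‖ + ‖w'‖) * ‖w - w'‖) := by ring
  have hG₁0 : G₁ 0 = 0 := by simp [hG₁]
  have hG₁bound : ∀ w : H, ‖G₁ w‖ ≤ ‖T‖ ^ 3 * ‖A₁‖ * ‖w‖ ^ 2 := by
    intro w
    have := hG₁lip w 0
    simp only [hG₁0, sub_zero, norm_zero, add_zero] at this
    calc ‖G₁ w‖ ≤ ‖T‖ ^ 3 * ‖A₁‖ * (‖w‖ * ‖w‖) := this
      _ = ‖T‖ ^ 3 * ‖A₁‖ * ‖w‖ ^ 2 := by ring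
  -- surjectivity of B via Lax-Milgram
  have hBsurj : Function.Surjective B := by
    have hcoer : IsCoercive ((innerSL ℝ).comp B) := by
      refine ⟨α, hα, fun u => ?_⟩
      simpa [sq, mul_assoc] using hB u
    have hsharp : InnerProductSpace.continuousLinearMapOfBilin ((innerSL ℝ).comp B) = B := by
      ext w
      refine ext_inner_right ℝ fun z => ?_
      rw [InnerProductSpace.continuousLinearMapOfBilin_apply]
      simp
    have hr := hcoer.range_eq_top
    rw [hsharp] at hr
    exact LinearMap.range_eq_top.mp hr
  -- existence of solutions of the linear problem in (ker T)ᗮ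
  have hexists : ∀ y ∈ LinearMap.range (ContinuousLinearMap.adjoint T : V →ₗ[ℝ] H),
      ∃ h ∈ (LinearMap.ker (T : H →ₗ[ℝ] V))ᗮ, G h = y := by
    rintro y ⟨w, rfl⟩
    obtain ⟨z, hz⟩ := hBsurj w
    obtain ⟨x, hx⟩ := hT z
    refine ⟨P x, (hP x).1, ?_⟩
    have hTx : T (P x) = z := by
      have h2 := (hP x).2
      rw [LinearMap.mem_ker] at h2
      have h3 : T x - T (P x) = 0 := by rw [← map_sub]; exact h2
      rw [← hx]
      have := sub_eq_zero.mp h3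
      exact this.symm
    rw [hG]
    simp only [ContinuousLinearMap.comp_apply]
    rw [hTx, hz]
    rfl
  -- existence of hh n
  have hex : ∀ n : ℕ, ∃ h ∈ (LinearMap.ker (T : H →ₗ[ℝ] V))ᗮ, G h = lbar - G₁ (v n) := by
    intro n
    apply hexists
    obtain ⟨w, hw⟩ := hlbar
    refine ⟨w - A₁ (T (v n)) (T (v n)), ?_⟩
    rw [map_sub, hw, hG₁]
    rfl
  choose hh hhK hhG using hex
  -- T (P x) = T x, hence G₁ (v n) = G₁ (P (v n))
  have hTP : ∀ x : H, T (P x) = T x := by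
    intro x
    have h2 := (hP x).2
    rw [LinearMap.mem_ker] at h2
    have h3 : T x - T (P x) = 0 := by rw [← map_sub]; exact h2
    exact (sub_eq_zero.mp h3).symm
  have hG₁P : ∀ x : H, G₁ x = G₁ (P x) := by
    intro x; rw [hG₁, hG₁, hTP]
  -- Lipschitz estimate for solutions of the linear problems
  have hdiff : ∀ (w w' h h' : H), h ∈ (LinearMap.ker (T : H →ₗ[ℝ] V))ᗮ → h' ∈ (LinearMap.ker (T : H →ₗ[ℝ] V))ᗮ →
      G h = lbar - G₁ w → G h' = lbar - G₁ w' →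
      c * ‖h - h'‖ ≤ ‖T‖ ^ 3 * ‖A₁‖ * ((‖w‖ + ‖w'‖) * ‖w - w'‖) := by
    intro w w' h h' hK hK' hGh hGh'
    have hmem : h - h' ∈ (LinearMap.ker (T : H →ₗ[ℝ] V))ᗮ := Submodule.sub_mem _ hK hK'
    calc c * ‖h - h'‖ ≤ ‖G (h - h')‖ := hcG _ hmem
      _ = ‖G₁ w' - G₁ w‖ := by rw [map_sub, hGh, hGh']; congr 1; abel
      _ ≤ ‖T‖ ^ 3 * ‖A₁‖ * ((‖w'‖ + ‖w‖) * ‖w' - w‖) := hG₁lip w' w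
      _ = ‖T‖ ^ 3 * ‖A₁‖ * ((‖w‖ + ‖w'‖) * ‖w - w'‖) := by
          rw [norm_sub_rev, add_comm]
  -- a priori bound for solutions of the linear problems
  have hbound : ∀ (w h : H), G h = lbar - G₁ w → h ∈ (LinearMap.ker (T : H →ₗ[ℝ] V))ᗮ →
      c * ‖h‖ ≤ ‖lbar‖ + ‖T‖ ^ 3 * ‖A₁‖ * ‖w‖ ^ 2 := by
    intro w h hGh hK
    calc c * ‖h‖ ≤ ‖G h‖ := hcG _ hK
      _ = ‖lbar - G₁ w‖ := by rw [hGh]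
      _ ≤ ‖lbar‖ + ‖G₁ w‖ := norm_sub_le _ _
      _ ≤ ‖lbar‖ + ‖T‖ ^ 3 * ‖A₁‖ * ‖w‖ ^ 2 := by gcongr; exact hG₁bound w
  -- ubar solves its own linear problem
  have hGubar : G ubar = lbar - G₁ ubar := eq_sub_of_add_eq hubar.2.2
  -- the radius ρ
  set D : ℝ := ε₀ + ‖lbar‖ / c with hD
  have hD0 : 0 < D := by
    have : 0 ≤ ‖lbar‖ / c := div_nonneg (norm_nonneg _) hc.le
    rw [hD]; linarith
  set ρ : ℝ := D / (1 - L) with hρ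
  have h1L : (0:ℝ) < 1 - L := by linarith
  have hρ0 : 0 < ρ := div_pos hD0 h1L
  have hDρ : D + L * ρ = ρ := by
    rw [hρ]; field_simp; ring
  -- ρ ≤ rs, from the hypothesis hE by letting n → ∞
  have hρrs : ρ ≤ rs := by
    have hDles : ∀ n : ℕ, D * (1 + L * ∑ k ∈ Finset.range n, L ^ k) ≤ rs := by
      intro n
      have h1 := hE n
      have h2 : 0 ≤ ∑ k ∈ Finset.Icc 2 (n + 1), ε k := by
        refine Finset.sum_nonneg fun k hk => ?_
        rw [hεk k (by rw [Finset.mem_Icc] at hk; omega)]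
        positivity
      have h3 : 0 ≤ (1 + L) * (∑ h ∈ Finset.range (n - 2), ∑ k ∈ Finset.Icc 3 (n - h),
          ε k * L ^ (n - h - k)) := by
        refine mul_nonneg (by linarith) (Finset.sum_nonneg fun i hi =>
          Finset.sum_nonneg fun k hk => ?_)
        rw [hεk k (by rw [Finset.mem_Icc] at hk; omega)]
        positivity
      have h4 : 0 ≤ ∑ k ∈ Finset.range n, L ^ k :=
        Finset.sum_nonneg fun _ _ => pow_nonneg hL0.le _
      have h5 : ε 1 = ε₀ := by rw [hεk 1 le_rfl, pow_one]
      rw [h5, hε0] at h1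
      have h7 : 0 ≤ ε₀ * ∑ k ∈ Finset.range n, L ^ k := mul_nonneg hε₀0.le h4
      rw [hD]
      linarith [h1, h2, h3, h7]
    have hgeo : Tendsto (fun n : ℕ => ∑ k ∈ Finset.range n, L ^ k) atTop (𝓝 (1 - L)⁻¹) :=
      (hasSum_geometric_of_lt_one hL0.le hL1).tendsto_sum_nat
    have htend : Tendsto (fun n : ℕ => D * (1 + L * ∑ k ∈ Finset.range n, L ^ k)) atTop
        (𝓝 (D * (1 + L * (1 - L)⁻¹))) :=
      tendsto_const_nhds.mul (tendsto_const_nhds.add (tendsto_const_nhds.mul hgeo))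
    have hlim := le_of_tendsto htend (Filter.Eventually.of_forall hDles)
    have heq : D * (1 + L * (1 - L)⁻¹) = ρ := by
      rw [hρ]; field_simp
      ring
    rw [heq] at hlim
    exact hlim
  -- ‖P (v n)‖ ≤ ρ for all n
  have hb : ∀ n : ℕ, ‖P (v n)‖ ≤ ρ := by
    intro n
    induction n with
    | zero => rw [hv0, map_zero, norm_zero]; exact hρ0.le
    | succ n ih =>
      have hεn : ε (n + 1) ≤ ε₀ := by
        rw [hεk (n + 1) (by omega)]
        calc ε₀ ^ (n + 1) ≤ ε₀ ^ 1 :=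
            pow_le_pow_of_le_one hε₀0.le hε₀1.le (by omega)
          _ = ε₀ := pow_one ε₀
      have hs := hstep n (hh n) (hhK n) (hhG n)
      have hGn : G (hh n) = lbar - G₁ (P (v n)) := by rw [hhG n, ← hG₁P (v n)]
      have hbn := hbound (P (v n)) (hh n) hGn (hhK n)
      -- c * ‖hh n‖ ≤ ‖lbar‖ + (L * c / (2 * rs)) * ρ^2 ≤ ‖lbar‖ + L * c * ρ
      have h7 : ‖T‖ ^ 3 * ‖A₁‖ * ‖P (v n)‖ ^ 2 ≤ L * c / (2 * rs) * ρ ^ 2 := by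
        rw [hQc]
        have : ‖P (v n)‖ ^ 2 ≤ ρ ^ 2 := by
          apply sq_le_sq' _ ih
          linarith [norm_nonneg (P (v n))]
        gcongr
      have h8 : L * c / (2 * rs) * ρ ^ 2 ≤ L * c * ρ := by
        rw [div_mul_eq_mul_div, div_le_iff₀ (by positivity)]
        have hρ2rs : ρ ≤ 2 * rs := by linarith
        calc L * c * ρ ^ 2 = L * c * ρ * ρ := by ring
          _ ≤ L * c * ρ * (2 * rs) := by gcongr
      have h9 : ‖hh n‖ ≤ ‖lbar‖ / c + L * ρ := by
        rw [← mul_le_mul_iff_right₀ hc]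
        calc c * ‖hh n‖ ≤ ‖lbar‖ + L * c * ρ := by linarith
          _ = c * (‖lbar‖ / c + L * ρ) := by field_simp
      calc ‖P (v (n + 1))‖ = ‖P (v (n + 1)) - hh n + hh n‖ := by congr 1; abel
        _ ≤ ‖P (v (n + 1)) - hh n‖ + ‖hh n‖ := norm_add_le _ _
        _ ≤ ε (n + 1) + (‖lbar‖ / c + L * ρ) := add_le_add hs h9
        _ ≤ ε₀ + (‖lbar‖ / c + L * ρ) := by linarith
        _ = D + L * ρ := by rw [hD]; ring
        _ = ρ := hDρ
  -- recursion for the error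
  have ha : ∀ n : ℕ, ‖P (v (n + 1)) - ubar‖ ≤ ε₀ ^ (n + 1) + L * ‖P (v n) - ubar‖ := by
    intro n
    have hs := hstep n (hh n) (hhK n) (hhG n)
    have hGn : G (hh n) = lbar - G₁ (P (v n)) := by rw [hhG n, ← hG₁P (v n)]
    have hd := hdiff (P (v n)) ubar (hh n) ubar (hhK n) hubar.1 hGn hGubar
    have h1 : ‖T‖ ^ 3 * ‖A₁‖ * ((‖P (v n)‖ + ‖ubar‖) * ‖P (v n) - ubar‖) ≤
        L * c / (2 * rs) * ((rs + rs) * ‖P (v n) - ubar‖) := by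
      rw [hQc]
      gcongr
      · exact le_trans (hb n) hρrs
      · exact hubar.2.1
    have h2 : L * c / (2 * rs) * ((rs + rs) * ‖P (v n) - ubar‖) =
        c * (L * ‖P (v n) - ubar‖) := by
      field_simp
      ring
    have h3 : ‖hh n - ubar‖ ≤ L * ‖P (v n) - ubar‖ :=
      le_of_mul_le_mul_left ((hd.trans h1).trans_eq h2) hc
    have hεe : ε (n + 1) = ε₀ ^ (n + 1) := hεk _ (by omega)
    calc ‖P (v (n + 1)) - ubar‖ = ‖P (v (n + 1)) - hh n + (hh n - ubar)‖ := by congr 1; abel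
      _ ≤ ‖P (v (n + 1)) - hh n‖ + ‖hh n - ubar‖ := norm_add_le _ _
      _ ≤ ε₀ ^ (n + 1) + L * ‖P (v n) - ubar‖ := by rw [← hεe]; exact add_le_add hs h3
  -- main estimate, by induction
  have hmain : ∀ n : ℕ, ‖P (v (n + 1)) - ubar‖ ≤
      ε₀ * (ε₀ ^ (n + 1) - L ^ (n + 1)) / (ε₀ - L) + L ^ n * rs := by
    intro n
    induction n with
    | zero =>
      have h0 : ‖P (v 0) - ubar‖ = ‖ubar‖ := by rw [hv0, map_zero, zero_sub, norm_neg]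
      have h1 := ha 0
      rw [h0] at h1
      have heq : ε₀ * (ε₀ ^ (0 + 1) - L ^ (0 + 1)) / (ε₀ - L) = ε₀ := by
        rw [pow_one, pow_one, mul_div_assoc, div_self (sub_ne_zero.mpr hε₀L), mul_one]
      rw [heq, pow_zero, one_mul]
      have h2 : L * ‖ubar‖ ≤ rs := by nlinarith [hubar.2.1, norm_nonneg ubar]
      calc ‖P (v (0 + 1)) - ubar‖ ≤ ε₀ ^ (0 + 1) + L * ‖ubar‖ := h1
        _ ≤ ε₀ + rs := by rw [pow_one]; linarith
    | succ n ih =>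
      have h1 := ha (n + 1)
      have h2 : L * ‖P (v (n + 1)) - ubar‖ ≤
          L * (ε₀ * (ε₀ ^ (n + 1) - L ^ (n + 1)) / (ε₀ - L) + L ^ n * rs) :=
        mul_le_mul_of_nonneg_left ih hL0.le
      have heq : ε₀ ^ (n + 1 + 1) +
          L * (ε₀ * (ε₀ ^ (n + 1) - L ^ (n + 1)) / (ε₀ - L) + L ^ n * rs) =
          ε₀ * (ε₀ ^ (n + 1 + 1) - L ^ (n + 1 + 1)) / (ε₀ - L) + L ^ (n + 1) * rs := by
        field_simp [sub_ne_zero.mpr hε₀L]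
        ring
      calc ‖P (v (n + 1 + 1)) - ubar‖
          ≤ ε₀ ^ (n + 1 + 1) + L * ‖P (v (n + 1)) - ubar‖ := h1
        _ ≤ ε₀ ^ (n + 1 + 1) +
            L * (ε₀ * (ε₀ ^ (n + 1) - L ^ (n + 1)) / (ε₀ - L) + L ^ n * rs) := by linarith
        _ = ε₀ * (ε₀ ^ (n + 1 + 1) - L ^ (n + 1 + 1)) / (ε₀ - L) + L ^ (n + 1) * rs := heq
  refine ⟨hmain, ?_⟩
  -- convergence
  have hε₀t : Tendsto (fun n : ℕ => ε₀ ^ n) atTop (𝓝 0) :=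
    tendsto_pow_atTop_nhds_zero_of_lt_one hε₀0.le hε₀1
  have hLt : Tendsto (fun n : ℕ => L ^ n) atTop (𝓝 0) :=
    tendsto_pow_atTop_nhds_zero_of_lt_one hL0.le hL1
  have hε₀t1 : Tendsto (fun n : ℕ => ε₀ ^ (n + 1)) atTop (𝓝 0) := by
    simpa [Function.comp_def] using hε₀t.comp (tendsto_add_atTop_nat 1)
  have hLt1 : Tendsto (fun n : ℕ => L ^ (n + 1)) atTop (𝓝 0) := by
    simpa [Function.comp_def] using hLt.comp (tendsto_add_atTop_nat 1)
  have hg : Tendsto (fun n : ℕ =>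
      ε₀ * (ε₀ ^ (n + 1) - L ^ (n + 1)) / (ε₀ - L) + L ^ n * rs) atTop (𝓝 0) := by
    have h := (((hε₀t1.sub hLt1).const_mul ε₀).div_const (ε₀ - L)).add
      (hLt.mul_const rs)
    simpa using h
  have h0 : Tendsto (fun n : ℕ => ‖P (v (n + 1)) - ubar‖) atTop (𝓝 0) :=
    squeeze_zero (fun n => norm_nonneg _) hmain hg
  have h1 : Tendsto (fun n : ℕ => ‖P (v n) - ubar‖) atTop (𝓝 0) := by
    rw [← tendsto_add_atTop_iff_nat 1]
    exact h0
  exact tendsto_iff_norm_sub_tendsto_zero.mpr h1
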